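/- Let X be a random variable on an n-dimensional product probability space that is C-Lipschitz, i.e., changing any single coordinate of the sample point changes X by at most C. Then for all t ≥ 0, Pr[|X - E[X]| > t] ≤ 2 exp(-t^2/(2 C^2 n)). -/

import Mathlib

open MeasureTheory

universe u

lemma bd_osc_finset {n : ℕ} {Ω : Fin n → Type*} {C : ℝ} (hC : 0 ≤ C)
    (X : (∀ i, Ω i) → ℝ)
    (hLip : ∀ ω ω' : ∀ i, Ω i, (∃ i, ∀ j, j ≠ i → ω j = ω' j) → |X ω - X ω'| ≤ C)
    (s : Finset (Fin n)) :
    ∀ ω ω' : ∀ i, Ω i, (∀ j ∉ s, ω j = ω' j) → |X ω - X ω'| ≤ s.card * C := by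
  classical
  induction s using Finset.induction with
  | empty =>
    intro ω ω' h
    have : ω = ω' := funext fun j => h j (by simp)
    simp [this, hC]
  | @insert i s hi ih =>
    intro ω ω' h
    set ω'' : ∀ i, Ω i := Function.update ω i (ω' i) with hω''
    have h1 : |X ω - X ω''| ≤ C := by
      refine hLip ω ω'' ⟨i, fun j hj => ?_⟩
      simp [hω'', Function.update_of_ne hj]
    have h2 : |X ω'' - X ω'| ≤ s.card * C := by
      refine ih ω'' ω' fun j hj => ?_
      by_cases hji : j = i
      · subst hji; simp [hω'']
      · have : j ∉ insert i s := by simp [hji, hj]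
        simp [hω'', Function.update_of_ne hji, h j this]
    calc |X ω - X ω'| = |(X ω - X ω'') + (X ω'' - X ω')| := by ring_nf
      _ ≤ |X ω - X ω''| + |X ω'' - X ω'| := abs_add_le _ _
      _ ≤ C + s.card * C := add_le_add h1 h2
      _ = (insert i s).card * C := by
        rw [Finset.card_insert_of_notMem hi]; push_cast; ring

lemma bd_osc {n : ℕ} {Ω : Fin n → Type*} {C : ℝ} (hC : 0 ≤ C)
    (X : (∀ i, Ω i) → ℝ)
    (hLip : ∀ ω ω' : ∀ i, Ω i, (∃ i, ∀ j, j ≠ i → ω j = ω' j) → |X ω - X ω'| ≤ C)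
    (ω ω' : ∀ i, Ω i) : |X ω - X ω'| ≤ n * C := by
  have := bd_osc_finset hC X hLip Finset.univ ω ω' (fun j hj => absurd (Finset.mem_univ j) hj)
  simpa using this

lemma integrable_of_abs_le {α : Type*} [MeasurableSpace α] {μ : Measure α} [IsFiniteMeasure μ]
    {h : α → ℝ} (hm : Measurable h) {B : ℝ} (hb : ∀ x, |h x| ≤ B) : Integrable h μ :=
  (integrable_const B).mono' hm.aestronglyMeasurable (ae_of_all _ fun x => by
    simpa [Real.norm_eq_abs] using hb x)

lemma hoeffding_one {α : Type*} [MeasurableSpace α] (μ : Measure α) [IsProbabilityMeasure μ]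
    {C : ℝ} (hC : 0 < C) (f : α → ℝ) (hf : Measurable f)
    (hb : ∀ x x', |f x - f x'| ≤ C) (l : ℝ) :
    ∫ x, Real.exp (l * f x) ∂μ ≤ Real.exp (l * ∫ x, f x ∂μ + l ^ 2 * C ^ 2 / 2) := by
  have hne : Nonempty α := by
    by_contra h
    have : μ Set.univ = 0 := by
      rw [Set.univ_eq_empty_iff.2 (not_nonempty_iff.1 h)]; simp
    simp [measure_univ] at this
  obtain ⟨x₀⟩ := hne
  have hfb : ∀ x, |f x| ≤ |f x₀| + C := fun x => by
    have := hb x x₀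
    have h2 : |f x| - |f x₀| ≤ |f x - f x₀| := by
      have := abs_sub_abs_le_abs_sub (f x) (f x₀); linarith
    linarith
  have hfint : Integrable f μ := integrable_of_abs_le hf (fun x => hfb x)
  set m := ∫ x, f x ∂μ with hm
  -- |f x - m| ≤ C
  have hgb : ∀ x, |f x - m| ≤ C := by
    intro x
    have : f x - m = ∫ x', (f x - f x') ∂μ := by
      rw [integral_sub (integrable_const _) hfint, integral_const]
      simp [measure_univ, hm]
    rw [this]
    calc |∫ x', (f x - f x') ∂μ| ≤ C * (μ Set.univ).toReal := by
          simpa [Real.norm_eq_abs] using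
            norm_integral_le_of_norm_le_const (μ := μ)
              (f := fun x' => f x - f x') (C := C)
              (ae_of_all _ fun x' => by simpa [Real.norm_eq_abs] using hb x x')
      _ = C := by simp [measure_univ]
  set a := l * C with ha
  -- pointwise convexity bound
  have key : ∀ x, Real.exp (l * (f x - m)) ≤
      Real.cosh a + ((f x - m) / C) * Real.sinh a := by
    intro x
    set y := f x - m with hy
    have hyC : -C ≤ y ∧ y ≤ C := abs_le.1 (hgb x)
    set θ : ℝ := (C - y) / (2 * C) with hθ
    have hθ0 : 0 ≤ θ := by
      apply div_nonneg <;> nlinarith [hyC.2]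
    have hθ1 : 0 ≤ 1 - θ := by
      rw [hθ]; rw [sub_nonneg, div_le_one (by linarith)]; linarith [hyC.1]
    have hsum : θ + (1 - θ) = 1 := by ring
    have hpt : l * y = θ * (-a) + (1 - θ) * a := by
      rw [hθ, ha]; field_simp; ring
    have hconv := convexOn_exp.2 (Set.mem_univ (-a)) (Set.mem_univ a) hθ0 hθ1 hsum
    simp only [smul_eq_mul] at hconv
    calc Real.exp (l * y) = Real.exp (θ * (-a) + (1 - θ) * a) := by rw [hpt]
      _ ≤ θ * Real.exp (-a) + (1 - θ) * Real.exp a := hconv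
      _ = Real.cosh a + (y / C) * Real.sinh a := by
          rw [Real.cosh_eq, Real.sinh_eq, hθ]; field_simp; ring
  -- integrate
  have hint1 : Integrable (fun x => Real.exp (l * (f x - m))) μ := by
    refine integrable_of_abs_le (by fun_prop) (B := Real.exp (|l| * C)) fun x => ?_
    rw [abs_of_pos (Real.exp_pos _), Real.exp_le_exp]
    calc l * (f x - m) ≤ |l * (f x - m)| := le_abs_self _
      _ = |l| * |f x - m| := abs_mul _ _
      _ ≤ |l| * C := by have := hgb x; nlinarith [abs_nonneg l]
  have hint2 : Integrable (fun x => Real.cosh a + ((f x - m) / C) * Real.sinh a) μ := by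
    apply Integrable.add (integrable_const _)
    exact ((hfint.sub (integrable_const m)).div_const C).mul_const _
  have hmain : ∫ x, Real.exp (l * (f x - m)) ∂μ ≤ Real.cosh a := by
    calc ∫ x, Real.exp (l * (f x - m)) ∂μ
        ≤ ∫ x, (Real.cosh a + ((f x - m) / C) * Real.sinh a) ∂μ :=
          integral_mono hint1 hint2 key
      _ = Real.cosh a := by
          have hsub : Integrable (fun x => f x - m) μ := by
            exact hfint.sub (integrable_const m)
          have hzero : ∫ x, (f x - m) ∂μ = 0 := by
            rw [integral_sub hfint (integrable_const _), integral_const]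
            simp [measure_univ, ← hm]
          rw [integral_add (integrable_const _) ((hsub.div_const C).mul_const _),
            integral_const, MeasureTheory.integral_mul_const, integral_div, hzero]
          simp [measure_univ]
  have hfinal : ∫ x, Real.exp (l * f x) ∂μ = Real.exp (l * m) * ∫ x, Real.exp (l * (f x - m)) ∂μ := by
    rw [← integral_const_mul]
    congr 1; funext x
    rw [← Real.exp_add]; ring_nf
  rw [hfinal]
  calc Real.exp (l * m) * ∫ x, Real.exp (l * (f x - m)) ∂μ
      ≤ Real.exp (l * m) * Real.cosh a :=
        mul_le_mul_of_nonneg_left hmain (Real.exp_pos _).le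
    _ ≤ Real.exp (l * m) * Real.exp (a ^ 2 / 2) :=
        mul_le_mul_of_nonneg_left (Real.cosh_le_exp_half_sq a) (Real.exp_pos _).le
    _ = Real.exp (l * m + l ^ 2 * C ^ 2 / 2) := by
        rw [← Real.exp_add, ha]; ring_nf

lemma mgf_aux : ∀ (n : ℕ) (Ω : Fin n → Type u) [inst : ∀ i, MeasurableSpace (Ω i)]
    (P : ∀ i, Measure (Ω i)) [instP : ∀ i, IsProbabilityMeasure (P i)]
    {C : ℝ} (_hC : 0 < C) (X : (∀ i, Ω i) → ℝ) (_hX : Measurable X)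
    (_hLip : ∀ ω ω' : ∀ i, Ω i, (∃ i, ∀ j, j ≠ i → ω j = ω' j) → |X ω - X ω'| ≤ C)
    (l : ℝ),
    ∫ ω, Real.exp (l * X ω) ∂(Measure.pi P) ≤
      Real.exp (l * (∫ ω, X ω ∂(Measure.pi P)) + n * (l ^ 2 * C ^ 2 / 2)) := by
  intro n
  induction n with
  | zero =>
    intro Ω inst P instP C hC X hX hLip l
    rw [integral_unique, integral_unique]
    simp [measure_univ]
  | succ n ih =>
    intro Ω inst P instP C hC X hX hLip l
    -- nonemptiness and boundedness
    have hne : ∀ i, Nonempty (Ω i) := by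
      intro i
      by_contra h
      rw [not_nonempty_iff] at h
      have h1 : (P i) Set.univ = 1 := measure_univ
      rw [Set.univ_eq_empty_iff.2 h] at h1
      simp at h1
    obtain ⟨ω₀⟩ : Nonempty (∀ i, Ω i) := ⟨fun i => (hne i).some⟩
    set B : ℝ := |X ω₀| + (n + 1) * C with hB
    have hXb : ∀ ω, |X ω| ≤ B := by
      intro ω
      have h1 := bd_osc hC.le X hLip ω ω₀
      have h2 := abs_sub_abs_le_abs_sub (X ω) (X ω₀)
      rw [hB]; push_cast at h1 ⊢; linarith
    -- the splitting equivalence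
    set νt := Measure.pi (fun j : Fin n => P ((0 : Fin (n+1)).succAbove j)) with hνt
    set e := MeasurableEquiv.piFinSuccAbove Ω 0 with he
    have hmp : MeasurePreserving e (Measure.pi P) ((P 0).prod νt) :=
      measurePreserving_piFinSuccAbove P 0
    have hcomp : ∀ (g : (∀ i, Ω i) → ℝ),
        ∫ p, g (e.symm p) ∂((P 0).prod νt) = ∫ ω, g ω ∂(Measure.pi P) :=
      fun g => (hmp.symm e).integral_comp' g
    have hsymm : ∀ (x : Ω 0) (y : ∀ j, Ω ((0 : Fin (n+1)).succAbove j)),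
        e.symm (x, y) = Fin.insertNth 0 x y := fun x y => rfl
    -- coordinate agreement facts
    have hagree1 : ∀ (x x' : Ω 0) (y : ∀ j, Ω ((0 : Fin (n+1)).succAbove j)),
        |X (e.symm (x, y)) - X (e.symm (x', y))| ≤ C := by
      intro x x' y
      refine hLip _ _ ⟨0, fun j hj => ?_⟩
      obtain ⟨a, rfl⟩ := Fin.exists_succAbove_eq hj
      rw [hsymm, hsymm, Fin.insertNth_apply_succAbove, Fin.insertNth_apply_succAbove]
    have hagree2 : ∀ (x : Ω 0) (y y' : ∀ j, Ω ((0 : Fin (n+1)).succAbove j)),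
        (∃ k, ∀ j, j ≠ k → y j = y' j) →
        |X (e.symm (x, y)) - X (e.symm (x, y'))| ≤ C := by
      rintro x y y' ⟨k, hk⟩
      refine hLip _ _ ⟨(0 : Fin (n+1)).succAbove k, fun j hj => ?_⟩
      rw [hsymm, hsymm]
      by_cases hj0 : j = 0
      · subst hj0; rw [Fin.insertNth_apply_same, Fin.insertNth_apply_same]
      · obtain ⟨a, rfl⟩ := Fin.exists_succAbove_eq (show j ≠ 0 from hj0)
        rw [Fin.insertNth_apply_succAbove, Fin.insertNth_apply_succAbove]
        exact hk a (fun hak => hj (by rw [hak]))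
    -- measurability
    have hYmeas : Measurable (fun p : Ω 0 × (∀ j, Ω ((0 : Fin (n+1)).succAbove j)) =>
        X (e.symm p)) := hX.comp e.symm.measurable
    have hYb : ∀ p, |X (e.symm p)| ≤ B := fun p => hXb _
    -- the conditional mean
    set m : (∀ j, Ω ((0 : Fin (n+1)).succAbove j)) → ℝ :=
      fun y => ∫ x, X (e.symm (x, y)) ∂(P 0) with hmdef
    have hmmeas : Measurable m :=
      (hYmeas.stronglyMeasurable.integral_prod_left').measurable
    have hmb : ∀ y, |m y| ≤ B := by
      intro y
      calc |m y| ≤ B * ((P 0) Set.univ).toReal := by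
            simpa [Real.norm_eq_abs, hmdef] using
              norm_integral_le_of_norm_le_const (μ := P 0)
                (f := fun x => X (e.symm (x, y))) (C := B)
                (ae_of_all _ fun x => by simpa [Real.norm_eq_abs] using hYb (x, y))
        _ = B := by simp [measure_univ]
    have hsecmeas : ∀ y, Measurable (fun x => X (e.symm (x, y))) := fun y =>
      hYmeas.comp (measurable_id.prodMk measurable_const)
    have hmLip : ∀ y y', (∃ k, ∀ j, j ≠ k → y j = y' j) → |m y - m y'| ≤ C := by
      rintro y y' hyy
      have hdiff : m y - m y' = ∫ x, (X (e.symm (x, y)) - X (e.symm (x, y'))) ∂(P 0) := by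
        rw [integral_sub (integrable_of_abs_le (hsecmeas y) (fun x => hYb (x, y)))
          (integrable_of_abs_le (hsecmeas y') (fun x => hYb (x, y')))]
      rw [hdiff]
      calc |∫ x, (X (e.symm (x, y)) - X (e.symm (x, y'))) ∂(P 0)|
          ≤ C * ((P 0) Set.univ).toReal := by
            simpa [Real.norm_eq_abs] using
              norm_integral_le_of_norm_le_const (μ := P 0)
                (f := fun x => X (e.symm (x, y)) - X (e.symm (x, y'))) (C := C)
                (ae_of_all _ fun x => by
                  simpa [Real.norm_eq_abs] using hagree2 x y y' hyy)
        _ = C := by simp [measure_univ]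
    -- integrability on the product
    have hYint : Integrable (fun p => Real.exp (l * X (e.symm p))) ((P 0).prod νt) := by
      refine integrable_of_abs_le (by fun_prop) (B := Real.exp (|l| * B)) fun p => ?_
      rw [abs_of_pos (Real.exp_pos _), Real.exp_le_exp]
      calc l * X (e.symm p) ≤ |l * X (e.symm p)| := le_abs_self _
        _ = |l| * |X (e.symm p)| := abs_mul _ _
        _ ≤ |l| * B := by have := hYb p; nlinarith [abs_nonneg l]
    have hXint : Integrable (fun p => X (e.symm p)) ((P 0).prod νt) :=
      integrable_of_abs_le hYmeas hYb
    -- Fubini for the mean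
    have hEm : ∫ y, m y ∂νt = ∫ ω, X ω ∂(Measure.pi P) := by
      rw [← hcomp X, integral_prod_symm _ hXint]
    -- main chain
    have step1 : ∫ ω, Real.exp (l * X ω) ∂(Measure.pi P)
        = ∫ y, ∫ x, Real.exp (l * X (e.symm (x, y))) ∂(P 0) ∂νt := by
      rw [← hcomp (fun ω => Real.exp (l * X ω)), integral_prod_symm _ hYint]
    have step2 : ∀ y, ∫ x, Real.exp (l * X (e.symm (x, y))) ∂(P 0)
        ≤ Real.exp (l * m y + l ^ 2 * C ^ 2 / 2) := by
      intro y
      exact hoeffding_one (P 0) hC (fun x => X (e.symm (x, y))) (hsecmeas y)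
        (fun x x' => hagree1 x x' y) l
    have hint3 : Integrable (fun y => ∫ x, Real.exp (l * X (e.symm (x, y))) ∂(P 0)) νt :=
      hYint.integral_prod_right
    have hint4 : Integrable (fun y => Real.exp (l * m y + l ^ 2 * C ^ 2 / 2)) νt := by
      refine integrable_of_abs_le (by fun_prop)
        (B := Real.exp (|l| * B + l ^ 2 * C ^ 2 / 2)) fun y => ?_
      rw [abs_of_pos (Real.exp_pos _), Real.exp_le_exp]
      have : l * m y ≤ |l| * B := by
        calc l * m y ≤ |l * m y| := le_abs_self _
          _ = |l| * |m y| := abs_mul _ _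
          _ ≤ |l| * B := by have := hmb y; nlinarith [abs_nonneg l]
      exact by linarith
    have hint5 : Integrable (fun y => Real.exp (l * m y)) νt := by
      refine integrable_of_abs_le (by fun_prop) (B := Real.exp (|l| * B)) fun y => ?_
      rw [abs_of_pos (Real.exp_pos _), Real.exp_le_exp]
      calc l * m y ≤ |l * m y| := le_abs_self _
        _ = |l| * |m y| := abs_mul _ _
        _ ≤ |l| * B := by have := hmb y; nlinarith [abs_nonneg l]
    calc ∫ ω, Real.exp (l * X ω) ∂(Measure.pi P)
        = ∫ y, ∫ x, Real.exp (l * X (e.symm (x, y))) ∂(P 0) ∂νt := step1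
      _ ≤ ∫ y, Real.exp (l * m y + l ^ 2 * C ^ 2 / 2) ∂νt :=
          integral_mono hint3 hint4 step2
      _ = Real.exp (l ^ 2 * C ^ 2 / 2) * ∫ y, Real.exp (l * m y) ∂νt := by
          rw [← integral_const_mul]
          congr 1; funext y; rw [← Real.exp_add]; ring_nf
      _ ≤ Real.exp (l ^ 2 * C ^ 2 / 2) *
          Real.exp (l * (∫ y, m y ∂νt) + n * (l ^ 2 * C ^ 2 / 2)) := by
          refine mul_le_mul_of_nonneg_left ?_ (Real.exp_pos _).le
          exact ih _ _ hC m hmmeas hmLip l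
      _ = Real.exp (l * (∫ ω, X ω ∂(Measure.pi P)) + (n + 1 : ℕ) * (l ^ 2 * C ^ 2 / 2)) := by
          rw [← Real.exp_add, hEm]; push_cast; ring_nf

lemma chernoff_side {n : ℕ} (hn : 0 < n) (Ω : Fin n → Type u) [∀ i, MeasurableSpace (Ω i)]
    (P : ∀ i, Measure (Ω i)) [∀ i, IsProbabilityMeasure (P i)]
    {C : ℝ} (hC : 0 < C) (X : (∀ i, Ω i) → ℝ) (hX : Measurable X)
    (hLip : ∀ ω ω' : ∀ i, Ω i, (∃ i, ∀ j, j ≠ i → ω j = ω' j) → |X ω - X ω'| ≤ C)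
    (t : ℝ) (ht : 0 ≤ t) :
    Measure.pi P {ω | X ω - ∫ ω', X ω' ∂(Measure.pi P) > t}
      ≤ ENNReal.ofReal (Real.exp (-t ^ 2 / (2 * C ^ 2 * n))) := by
  set μ := Measure.pi P with hμ
  set E := ∫ ω', X ω' ∂μ with hE
  -- nonemptiness and boundedness
  have hne : ∀ i, Nonempty (Ω i) := by
    intro i
    by_contra h
    rw [not_nonempty_iff] at h
    have h1 : (P i) Set.univ = 1 := measure_univ
    rw [Set.univ_eq_empty_iff.2 h] at h1
    simp at h1
  obtain ⟨ω₀⟩ : Nonempty (∀ i, Ω i) := ⟨fun i => (hne i).some⟩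
  have hXb : ∀ ω, |X ω| ≤ |X ω₀| + n * C := by
    intro ω
    have h1 := bd_osc hC.le X hLip ω ω₀
    have h2 := abs_sub_abs_le_abs_sub (X ω) (X ω₀)
    linarith
  set l : ℝ := t / (n * C ^ 2) with hl
  have hl0 : 0 ≤ l := div_nonneg ht (by positivity)
  have hexpint : Integrable (fun ω => Real.exp (l * X ω)) μ := by
    refine integrable_of_abs_le (by fun_prop) (B := Real.exp (|l| * (|X ω₀| + n * C))) fun ω => ?_
    rw [abs_of_pos (Real.exp_pos _), Real.exp_le_exp]
    calc l * X ω ≤ |l * X ω| := le_abs_self _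
      _ = |l| * |X ω| := abs_mul _ _
      _ ≤ |l| * (|X ω₀| + n * C) := by have := hXb ω; nlinarith [abs_nonneg l]
  have hmgf := mgf_aux n Ω P hC X hX hLip l
  rw [← hμ, ← hE] at hmgf
  -- Markov
  have hsub : {ω | X ω - E > t} ⊆ {ω | Real.exp (l * (t + E)) ≤ Real.exp (l * X ω)} := by
    intro ω hω
    simp only [Set.mem_setOf_eq] at hω ⊢
    rw [Real.exp_le_exp]
    have : t + E ≤ X ω := by linarith
    nlinarith
  have hmark := mul_meas_ge_le_integral_of_nonneg
    (μ := μ) (f := fun ω => Real.exp (l * X ω))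
    (ae_of_all _ fun ω => (Real.exp_pos _).le) hexpint (Real.exp (l * (t + E)))
  have hmono : μ {ω | X ω - E > t} ≤ μ {ω | Real.exp (l * (t + E)) ≤ Real.exp (l * X ω)} :=
    measure_mono hsub
  -- conclude in reals
  have harith : l * E + n * (l ^ 2 * C ^ 2 / 2) - l * (t + E) = -t ^ 2 / (2 * C ^ 2 * n) := by
    rw [hl]
    have hn' : (n : ℝ) ≠ 0 := Nat.cast_ne_zero.2 hn.ne'
    field_simp
    ring
  have key : (μ {ω | X ω - E > t}).toReal ≤ Real.exp (-t ^ 2 / (2 * C ^ 2 * n)) := by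
    have h1 : (μ {ω | X ω - E > t}).toReal
        ≤ (μ {ω | Real.exp (l * (t + E)) ≤ Real.exp (l * X ω)}).toReal :=
      ENNReal.toReal_mono (measure_ne_top _ _) hmono
    have h2 : Real.exp (l * (t + E)) *
        (μ {ω | Real.exp (l * (t + E)) ≤ Real.exp (l * X ω)}).toReal
        ≤ Real.exp (l * E + n * (l ^ 2 * C ^ 2 / 2)) := le_trans hmark hmgf
    have h3 : (μ {ω | Real.exp (l * (t + E)) ≤ Real.exp (l * X ω)}).toReal
        ≤ Real.exp (l * E + n * (l ^ 2 * C ^ 2 / 2)) / Real.exp (l * (t + E)) := by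
      rw [le_div_iff₀ (Real.exp_pos _)]
      linarith [h2]
    calc (μ {ω | X ω - E > t}).toReal
        ≤ Real.exp (l * E + n * (l ^ 2 * C ^ 2 / 2)) / Real.exp (l * (t + E)) :=
          le_trans h1 h3
      _ = Real.exp (l * E + n * (l ^ 2 * C ^ 2 / 2) - l * (t + E)) := by
          rw [Real.exp_sub]
      _ = Real.exp (-t ^ 2 / (2 * C ^ 2 * n)) := by rw [harith]
  exact (ENNReal.le_ofReal_iff_toReal_le (measure_ne_top _ _) (Real.exp_pos _).le).2 key

/-- Hoeffding–Azuma / bounded differences inequality: if `X` is a `C`-Lipschitz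
random variable on an `n`-dimensional product probability space (changing any single
coordinate changes `X` by at most `C`), then for all `t ≥ 0`,
`Pr[|X - E X| > t] ≤ 2 exp(-t²/(2 C² n))`. -/
theorem bounded_differences_inequality (n : ℕ) (hn : 0 < n)
    (Ω : Fin n → Type*) [∀ i, MeasurableSpace (Ω i)]
    (P : ∀ i, Measure (Ω i)) [∀ i, IsProbabilityMeasure (P i)]
    (C : ℝ) (hC : 0 < C)
    (X : (∀ i, Ω i) → ℝ) (hX : Measurable X)
    (hLip : ∀ ω ω' : ∀ i, Ω i, (∃ i, ∀ j, j ≠ i → ω j = ω' j) → |X ω - X ω'| ≤ C)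
    (t : ℝ) (ht : 0 ≤ t) :
    Measure.pi P {ω | |X ω - ∫ ω', X ω' ∂(Measure.pi P)| > t}
      ≤ ENNReal.ofReal (2 * Real.exp (-t ^ 2 / (2 * C ^ 2 * n))) := by
  set μ := Measure.pi P with hμ
  set E := ∫ ω', X ω' ∂μ with hE
  have h1 : μ {ω | X ω - E > t} ≤ ENNReal.ofReal (Real.exp (-t ^ 2 / (2 * C ^ 2 * n))) :=
    chernoff_side hn Ω P hC X hX hLip t ht
  have h2 : μ {ω | E - X ω > t} ≤ ENNReal.ofReal (Real.exp (-t ^ 2 / (2 * C ^ 2 * n))) := by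
    have hLip' : ∀ ω ω' : ∀ i, Ω i, (∃ i, ∀ j, j ≠ i → ω j = ω' j) →
        |(fun ω => -X ω) ω - (fun ω => -X ω) ω'| ≤ C := by
      intro ω ω' h
      have := hLip ω ω' h
      calc |(fun ω => -X ω) ω - (fun ω => -X ω) ω'| = |X ω - X ω'| := by
            simp only []; rw [abs_sub_comm]; ring_nf
        _ ≤ C := this
    have := chernoff_side hn Ω P hC (fun ω => -X ω) hX.neg hLip' t ht
    have hEneg : ∫ ω', (fun ω => -X ω) ω' ∂μ = -E := by
      rw [hE]; exact integral_neg X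
    rw [hEneg] at this
    convert this using 2
    ext ω
    simp only [Set.mem_setOf_eq]
    constructor <;> intro h <;> linarith
  calc μ {ω | |X ω - E| > t}
      ≤ μ ({ω | X ω - E > t} ∪ {ω | E - X ω > t}) := by
        apply measure_mono
        intro ω hω
        simp only [Set.mem_setOf_eq, Set.mem_union] at hω ⊢
        rcases lt_abs.1 hω with h | h
        · left; exact h
        · right; linarith
    _ ≤ μ {ω | X ω - E > t} + μ {ω | E - X ω > t} := measure_union_le _ _
    _ ≤ ENNReal.ofReal (Real.exp (-t ^ 2 / (2 * C ^ 2 * n)))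
        + ENNReal.ofReal (Real.exp (-t ^ 2 / (2 * C ^ 2 * n))) := add_le_add h1 h2
    _ = ENNReal.ofReal (2 * Real.exp (-t ^ 2 / (2 * C ^ 2 * n))) := by
        rw [← ENNReal.ofReal_add (Real.exp_pos _).le (Real.exp_pos _).le]
        congr 1
        ring
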